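/- arXiv:2511.18667 — 3 statements merged into one kernel-verified Lean document; each statement's English description precedes it below -/
import Mathlib

section
/- (Modular implicit differentiation, Proposition 1.) Let F : ℝⁿ × ℝᵖ → ℝⁿ be Fréchet differentiable and let x̂ : ℝᵖ → ℝⁿ be Fréchet differentiable with x̂(θ) = F(x̂(θ), θ) for all θ ∈ ℝᵖ. Fix θ₀, let J : ℝⁿ →L[ℝ] ℝⁿ be the partial Fréchet derivative of F in its first argument at (x̂(θ₀), θ₀), let ∂_θF : ℝᵖ →L[ℝ] ℝⁿ be the partial derivative in the second argument at the same point, and assume id − J is invertible. Then for every linear functional g : ℝⁿ →L[ℝ] ℝ, the vector–Jacobian product g ∘ Dx̂(θ₀) equals β* ∘ ∂_θF, where β* : ℝⁿ →L[ℝ] ℝ is the unique linear functional satisfying the fixed-point equation β* = β* ∘ J + g. -/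
/-- Modular implicit differentiation (Proposition 1): for any upstream gradient
(row vector) `g`, the vector–Jacobian product `g ∘ Dx̂(θ₀)` equals `β* ∘ ∂θF`,
where `β*` is the unique linear functional satisfying `β* = β* ∘ J + g`. -/
theorem modular_implicit_differentiation
    (n p : ℕ)
    (F : EuclideanSpace ℝ (Fin n) × EuclideanSpace ℝ (Fin p) → EuclideanSpace ℝ (Fin n))
    (xhat : EuclideanSpace ℝ (Fin p) → EuclideanSpace ℝ (Fin n))
    (hfix : ∀ θ, xhat θ = F (xhat θ, θ))
    (θ₀ : EuclideanSpace ℝ (Fin p))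
    (J : EuclideanSpace ℝ (Fin n) →L[ℝ] EuclideanSpace ℝ (Fin n))
    (dθF : EuclideanSpace ℝ (Fin p) →L[ℝ] EuclideanSpace ℝ (Fin n))
    (hF : HasFDerivAt F
      (J.comp (ContinuousLinearMap.fst ℝ (EuclideanSpace ℝ (Fin n)) (EuclideanSpace ℝ (Fin p))) +
        dθF.comp (ContinuousLinearMap.snd ℝ (EuclideanSpace ℝ (Fin n)) (EuclideanSpace ℝ (Fin p))))
      (xhat θ₀, θ₀))
    (Dxhat : EuclideanSpace ℝ (Fin p) →L[ℝ] EuclideanSpace ℝ (Fin n))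
    (hxhat : HasFDerivAt xhat Dxhat θ₀)
    (K : EuclideanSpace ℝ (Fin n) →L[ℝ] EuclideanSpace ℝ (Fin n))
    (hK₁ : (ContinuousLinearMap.id ℝ (EuclideanSpace ℝ (Fin n)) - J).comp K =
      ContinuousLinearMap.id ℝ (EuclideanSpace ℝ (Fin n)))
    (hK₂ : K.comp (ContinuousLinearMap.id ℝ (EuclideanSpace ℝ (Fin n)) - J) =
      ContinuousLinearMap.id ℝ (EuclideanSpace ℝ (Fin n))) :
    ∀ g : EuclideanSpace ℝ (Fin n) →L[ℝ] ℝ,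
      (∃! β : EuclideanSpace ℝ (Fin n) →L[ℝ] ℝ, β = β.comp J + g) ∧
      ∀ β : EuclideanSpace ℝ (Fin n) →L[ℝ] ℝ, β = β.comp J + g →
        g.comp Dxhat = β.comp dθF := by
  intro g
  have hprod : HasFDerivAt (fun θ => (xhat θ, θ))
      (Dxhat.prod (ContinuousLinearMap.id ℝ (EuclideanSpace ℝ (Fin p)))) θ₀ :=
    HasFDerivAt.prodMk hxhat (hasFDerivAt_id θ₀)
  have hcomp := HasFDerivAt.comp (f := fun θ => (xhat θ, θ)) θ₀ hF hprod
  have hxhat' : HasFDerivAt xhat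
      ((J.comp (ContinuousLinearMap.fst ℝ (EuclideanSpace ℝ (Fin n)) (EuclideanSpace ℝ (Fin p))) +
        dθF.comp (ContinuousLinearMap.snd ℝ (EuclideanSpace ℝ (Fin n)) (EuclideanSpace ℝ (Fin p)))).comp
        (Dxhat.prod (ContinuousLinearMap.id ℝ (EuclideanSpace ℝ (Fin p))))) θ₀ := by
    have heq : (F ∘ fun θ => (xhat θ, θ)) = xhat := by
      funext θ; exact (hfix θ).symm
    rwa [heq] at hcomp
  have hD : Dxhat = J.comp Dxhat + dθF := by
    have h1 := hxhat.unique hxhat'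
    refine ContinuousLinearMap.ext fun v => ?_
    have h2 := DFunLike.congr_fun h1 v
    simpa using h2
  have hid : (ContinuousLinearMap.id ℝ (EuclideanSpace ℝ (Fin n)) - J).comp Dxhat = dθF := by
    refine ContinuousLinearMap.ext fun v => ?_
    have h2 := DFunLike.congr_fun hD v
    simp only [ContinuousLinearMap.add_apply, ContinuousLinearMap.comp_apply] at h2
    simp only [ContinuousLinearMap.comp_apply, ContinuousLinearMap.sub_apply,
      ContinuousLinearMap.id_apply]
    rw [sub_eq_iff_eq_add']
    exact h2
  have hDx : Dxhat = K.comp dθF := by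
    rw [← hid, ← ContinuousLinearMap.comp_assoc, hK₂, ContinuousLinearMap.id_comp]
  have key : ∀ β : EuclideanSpace ℝ (Fin n) →L[ℝ] ℝ, β = β.comp J + g ↔ β = g.comp K := by
    intro β
    constructor
    · intro h
      have h2 : β.comp (ContinuousLinearMap.id ℝ (EuclideanSpace ℝ (Fin n)) - J) = g := by
        rw [ContinuousLinearMap.comp_sub, ContinuousLinearMap.comp_id]
        nth_rewrite 1 [h]
        ext v; simp
      calc β = β.comp (ContinuousLinearMap.id ℝ (EuclideanSpace ℝ (Fin n))) := by
              rw [ContinuousLinearMap.comp_id]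
        _ = β.comp ((ContinuousLinearMap.id ℝ (EuclideanSpace ℝ (Fin n)) - J).comp K) := by rw [hK₁]
        _ = g.comp K := by rw [← ContinuousLinearMap.comp_assoc, h2]
    · intro h
      subst h
      ext v
      have hk := DFunLike.congr_fun hK₂ v
      simp only [ContinuousLinearMap.comp_apply, ContinuousLinearMap.sub_apply,
        ContinuousLinearMap.id_apply, map_sub] at hk
      have hkv : K v = v + K (J v) := eq_add_of_sub_eq hk
      simp only [ContinuousLinearMap.add_apply, ContinuousLinearMap.comp_apply]
      rw [hkv, map_add, add_comm]
  constructor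
  · exact ⟨g.comp K, (key _).2 rfl, fun β hβ => (key β).1 hβ⟩
  · intro β hβ
    rw [(key β).1 hβ, hDx, ← ContinuousLinearMap.comp_assoc]
end

section
/- (Equation (7) of the paper.) Let F : ℝⁿ × ℝᵖ → ℝⁿ be Fréchet differentiable, let x̂ : ℝᵖ → ℝⁿ be Fréchet differentiable with x̂(θ) = F(x̂(θ), θ) for all θ, and let ℓ : ℝⁿ → ℝ be Fréchet differentiable. Fix θ₀, let J be the partial Fréchet derivative of F in its first argument at (x̂(θ₀), θ₀) and ∂_θF the partial derivative in the second argument there, and assume id − J is invertible. Then the Fréchet derivative of the composite θ ↦ ℓ(x̂(θ)) at θ₀ equals Dℓ(x̂(θ₀)) ∘ (id − J)⁻¹ ∘ ∂_θF. -/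
/-- Equation (7) of the paper: the Fréchet derivative of the composite loss
`θ ↦ ℓ(x̂(θ))` at `θ₀` equals `Dℓ(x̂(θ₀)) ∘ (id − J)⁻¹ ∘ ∂θF`, where `K = (id − J)⁻¹`. -/
theorem deriv_of_loss_through_fixed_point
    (n p : ℕ)
    (F : EuclideanSpace ℝ (Fin n) × EuclideanSpace ℝ (Fin p) → EuclideanSpace ℝ (Fin n))
    (xhat : EuclideanSpace ℝ (Fin p) → EuclideanSpace ℝ (Fin n))
    (hfix : ∀ θ, xhat θ = F (xhat θ, θ))
    (ℓ : EuclideanSpace ℝ (Fin n) → ℝ)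
    (θ₀ : EuclideanSpace ℝ (Fin p))
    (J : EuclideanSpace ℝ (Fin n) →L[ℝ] EuclideanSpace ℝ (Fin n))
    (dθF : EuclideanSpace ℝ (Fin p) →L[ℝ] EuclideanSpace ℝ (Fin n))
    (hF : HasFDerivAt F
      (J.comp (ContinuousLinearMap.fst ℝ (EuclideanSpace ℝ (Fin n)) (EuclideanSpace ℝ (Fin p))) +
        dθF.comp (ContinuousLinearMap.snd ℝ (EuclideanSpace ℝ (Fin n)) (EuclideanSpace ℝ (Fin p))))
      (xhat θ₀, θ₀))
    (Dxhat : EuclideanSpace ℝ (Fin p) →L[ℝ] EuclideanSpace ℝ (Fin n))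
    (hxhat : HasFDerivAt xhat Dxhat θ₀)
    (Dℓ : EuclideanSpace ℝ (Fin n) →L[ℝ] ℝ)
    (hℓ : HasFDerivAt ℓ Dℓ (xhat θ₀))
    (K : EuclideanSpace ℝ (Fin n) →L[ℝ] EuclideanSpace ℝ (Fin n))
    (hK₁ : (ContinuousLinearMap.id ℝ (EuclideanSpace ℝ (Fin n)) - J).comp K =
      ContinuousLinearMap.id ℝ (EuclideanSpace ℝ (Fin n)))
    (hK₂ : K.comp (ContinuousLinearMap.id ℝ (EuclideanSpace ℝ (Fin n)) - J) =
      ContinuousLinearMap.id ℝ (EuclideanSpace ℝ (Fin n))) :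
    HasFDerivAt (fun θ => ℓ (xhat θ)) ((Dℓ.comp K).comp dθF) θ₀ := by
  have hpair : HasFDerivAt (fun θ : EuclideanSpace ℝ (Fin p) => (xhat θ, θ))
      (Dxhat.prod (ContinuousLinearMap.id ℝ (EuclideanSpace ℝ (Fin p)))) θ₀ :=
    hxhat.prodMk (hasFDerivAt_id θ₀)
  have hcomp : HasFDerivAt (fun θ => F (xhat θ, θ))
      (J.comp Dxhat + dθF) θ₀ := by
    have h := HasFDerivAt.comp (g := F) (f := fun θ => (xhat θ, θ)) θ₀ hF hpair
    exact h.congr_fderiv (ContinuousLinearMap.ext fun x => by simp)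
  have heq : HasFDerivAt xhat (J.comp Dxhat + dθF) θ₀ := by
    have hfun : (fun θ => F (xhat θ, θ)) = xhat := by
      funext θ; exact (hfix θ).symm
    rwa [hfun] at hcomp
  have hD : Dxhat = K.comp dθF := by
    have h1 : Dxhat = J.comp Dxhat + dθF := hxhat.unique heq
    have h2 : (ContinuousLinearMap.id ℝ (EuclideanSpace ℝ (Fin n)) - J).comp Dxhat = dθF := by
      rw [ContinuousLinearMap.sub_comp, ContinuousLinearMap.id_comp]
      nth_rewrite 1 [h1]
      abel
    calc Dxhat = (K.comp (ContinuousLinearMap.id ℝ (EuclideanSpace ℝ (Fin n)) - J)).comp Dxhat := by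
          rw [hK₂, ContinuousLinearMap.id_comp]
      _ = K.comp ((ContinuousLinearMap.id ℝ (EuclideanSpace ℝ (Fin n)) - J).comp Dxhat) := by
          rw [ContinuousLinearMap.comp_assoc]
      _ = K.comp dθF := by rw [h2]
  have hfinal := hℓ.comp θ₀ hxhat
  rwa [hD, ← ContinuousLinearMap.comp_assoc] at hfinal
end

section
/- (Equation (8) of the paper, implicit differentiation as a fixed-point problem.) Let F : ℝⁿ × ℝᵖ → ℝⁿ be Fréchet differentiable, let x̂ : ℝᵖ → ℝⁿ be Fréchet differentiable with x̂(θ) = F(x̂(θ), θ) for all θ, and let ℓ : ℝⁿ → ℝ be Fréchet differentiable. Fix θ₀, let J be the partial Fréchet derivative of F in its first argument at (x̂(θ₀), θ₀) and ∂_θF the partial derivative in the second argument there, and assume id − J is invertible. Then the derivative of θ ↦ ℓ(x̂(θ)) at θ₀ equals β* ∘ ∂_θF, where β* is the unique linear functional on ℝⁿ satisfying β* = β* ∘ J + Dℓ(x̂(θ₀)). -/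
/-- Equation (8) of the paper: the derivative of `θ ↦ ℓ(x̂(θ))` at `θ₀` equals
`β* ∘ ∂θF`, where `β*` is the unique linear functional satisfying the fixed-point
equation `β* = β* ∘ J + Dℓ(x̂(θ₀))`. -/
theorem implicit_differentiation_as_fixed_point
    (n p : ℕ)
    (F : EuclideanSpace ℝ (Fin n) × EuclideanSpace ℝ (Fin p) → EuclideanSpace ℝ (Fin n))
    (xhat : EuclideanSpace ℝ (Fin p) → EuclideanSpace ℝ (Fin n))
    (hfix : ∀ θ, xhat θ = F (xhat θ, θ))
    (ℓ : EuclideanSpace ℝ (Fin n) → ℝ)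
    (θ₀ : EuclideanSpace ℝ (Fin p))
    (J : EuclideanSpace ℝ (Fin n) →L[ℝ] EuclideanSpace ℝ (Fin n))
    (dθF : EuclideanSpace ℝ (Fin p) →L[ℝ] EuclideanSpace ℝ (Fin n))
    (hF : HasFDerivAt F
      (J.comp (ContinuousLinearMap.fst ℝ (EuclideanSpace ℝ (Fin n)) (EuclideanSpace ℝ (Fin p))) +
        dθF.comp (ContinuousLinearMap.snd ℝ (EuclideanSpace ℝ (Fin n)) (EuclideanSpace ℝ (Fin p))))
      (xhat θ₀, θ₀))
    (Dxhat : EuclideanSpace ℝ (Fin p) →L[ℝ] EuclideanSpace ℝ (Fin n))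
    (hxhat : HasFDerivAt xhat Dxhat θ₀)
    (Dℓ : EuclideanSpace ℝ (Fin n) →L[ℝ] ℝ)
    (hℓ : HasFDerivAt ℓ Dℓ (xhat θ₀))
    (K : EuclideanSpace ℝ (Fin n) →L[ℝ] EuclideanSpace ℝ (Fin n))
    (hK₁ : (ContinuousLinearMap.id ℝ (EuclideanSpace ℝ (Fin n)) - J).comp K =
      ContinuousLinearMap.id ℝ (EuclideanSpace ℝ (Fin n)))
    (hK₂ : K.comp (ContinuousLinearMap.id ℝ (EuclideanSpace ℝ (Fin n)) - J) =
      ContinuousLinearMap.id ℝ (EuclideanSpace ℝ (Fin n))) :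
    (∃! β : EuclideanSpace ℝ (Fin n) →L[ℝ] ℝ, β = β.comp J + Dℓ) ∧
      ∀ β : EuclideanSpace ℝ (Fin n) →L[ℝ] ℝ, β = β.comp J + Dℓ →
        HasFDerivAt (fun θ => ℓ (xhat θ)) (β.comp dθF) θ₀ := by

  classical
  -- β satisfies the fixed point iff β.comp (id - J) = Dℓ
  have key : ∀ β : EuclideanSpace ℝ (Fin n) →L[ℝ] ℝ, (β = β.comp J + Dℓ) ↔ β = Dℓ.comp K := by
    intro β
    constructor
    · intro h
      have h1 : β.comp (ContinuousLinearMap.id ℝ (EuclideanSpace ℝ (Fin n)) - J) = Dℓ := by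
        ext v
        have := congrArg (fun f : EuclideanSpace ℝ (Fin n) →L[ℝ] ℝ => f v) h
        simp only [ContinuousLinearMap.comp_apply, ContinuousLinearMap.sub_apply,
          ContinuousLinearMap.add_apply, ContinuousLinearMap.id_apply] at *
        simp [map_sub]
        linarith
      calc β = β.comp (ContinuousLinearMap.id ℝ (EuclideanSpace ℝ (Fin n))) := by ext v; simp
        _ = β.comp ((ContinuousLinearMap.id ℝ (EuclideanSpace ℝ (Fin n)) - J).comp K) := by rw [hK₁]
        _ = (β.comp (ContinuousLinearMap.id ℝ (EuclideanSpace ℝ (Fin n)) - J)).comp K := by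
            rw [ContinuousLinearMap.comp_assoc]
        _ = Dℓ.comp K := by rw [h1]
    · intro h
      subst h
      ext v
      have hKv : K ((ContinuousLinearMap.id ℝ (EuclideanSpace ℝ (Fin n)) - J) v) = v := by
        have := congrArg (fun f : EuclideanSpace ℝ (Fin n) →L[ℝ] EuclideanSpace ℝ (Fin n) => f v) hK₂
        simpa using this
      simp only [ContinuousLinearMap.comp_apply, ContinuousLinearMap.add_apply]
      have : Dℓ (K v) = Dℓ (K (J v)) + Dℓ v := by
        have : v = (ContinuousLinearMap.id ℝ (EuclideanSpace ℝ (Fin n)) - J) v + J v := by simp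
        conv_lhs => rw [this]
        rw [map_add, map_add, hKv]
        ring
      exact this
  -- the derivative of θ ↦ F (xhat θ, θ)
  have hpair : HasFDerivAt (fun θ : EuclideanSpace ℝ (Fin p) =>
      ((xhat θ, θ) : EuclideanSpace ℝ (Fin n) × EuclideanSpace ℝ (Fin p)))
      ((Dxhat.prod (ContinuousLinearMap.id ℝ (EuclideanSpace ℝ (Fin p))))) θ₀ :=
    hxhat.prodMk (hasFDerivAt_id θ₀)
  have hcomp : HasFDerivAt (fun θ => F (xhat θ, θ))
      (((J.comp (ContinuousLinearMap.fst ℝ (EuclideanSpace ℝ (Fin n)) (EuclideanSpace ℝ (Fin p))) +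
        dθF.comp (ContinuousLinearMap.snd ℝ (EuclideanSpace ℝ (Fin n)) (EuclideanSpace ℝ (Fin p))))).comp
        (Dxhat.prod (ContinuousLinearMap.id ℝ (EuclideanSpace ℝ (Fin p))))) θ₀ :=
    HasFDerivAt.comp (g := F) (f := fun θ => (xhat θ, θ)) θ₀ hF hpair
  have hEq : ((J.comp (ContinuousLinearMap.fst ℝ (EuclideanSpace ℝ (Fin n)) (EuclideanSpace ℝ (Fin p))) +
        dθF.comp (ContinuousLinearMap.snd ℝ (EuclideanSpace ℝ (Fin n)) (EuclideanSpace ℝ (Fin p))))).comp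
        (Dxhat.prod (ContinuousLinearMap.id ℝ (EuclideanSpace ℝ (Fin p)))) = J.comp Dxhat + dθF := by
    refine ContinuousLinearMap.ext fun v => ?_
    simp
  have hsame : HasFDerivAt xhat (J.comp Dxhat + dθF) θ₀ := by
    have hfun : (fun θ : EuclideanSpace ℝ (Fin p) => F (xhat θ, θ)) = xhat :=
      funext fun θ => (hfix θ).symm
    rw [hfun, hEq] at hcomp
    exact hcomp
  have hDx : J.comp Dxhat + dθF = Dxhat := hsame.unique hxhat
  -- (id - J).comp Dxhat = dθF
  have hIJ : (ContinuousLinearMap.id ℝ (EuclideanSpace ℝ (Fin n)) - J).comp Dxhat = dθF := by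
    refine ContinuousLinearMap.ext fun v => ?_
    have h : J (Dxhat v) + dθF v = Dxhat v := by
      have := congrArg (fun f : EuclideanSpace ℝ (Fin p) →L[ℝ] EuclideanSpace ℝ (Fin n) => f v) hDx
      simpa using this
    simp only [ContinuousLinearMap.comp_apply, ContinuousLinearMap.sub_apply,
      ContinuousLinearMap.id_apply]
    exact sub_eq_of_eq_add' h.symm
  constructor
  · refine ⟨Dℓ.comp K, (key _).2 rfl, fun β hβ => (key β).1 hβ⟩
  · intro β hβ
    have hβJ : β.comp (ContinuousLinearMap.id ℝ (EuclideanSpace ℝ (Fin n)) - J) = β - β.comp J := by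
      ext v; simp [map_sub]
    have hβD : β - β.comp J = Dℓ := by
      ext v
      have h := congrArg (fun f : EuclideanSpace ℝ (Fin n) →L[ℝ] ℝ => f v) hβ
      simp only [ContinuousLinearMap.add_apply, ContinuousLinearMap.comp_apply,
        ContinuousLinearMap.sub_apply] at h ⊢
      linarith
    have : β.comp dθF = Dℓ.comp Dxhat := by
      rw [← hIJ, ← ContinuousLinearMap.comp_assoc, hβJ, hβD]
    rw [this]
    exact hℓ.comp θ₀ hxhat
end
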